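/- Let F be submodular with F(∅)=0 and w ∈ ℝ_+^p. Order the components w_{j1} ≥ ... ≥ w_{jp} ≥ 0 and define s by s_{jk} = F({j1,...,jk}) − F({j1,...,j_{k−1}}). Then s ∈ P(F), s maximizes w^T s over P(F), and the maximum value equals f(w), the Lovász extension of F at w. -/

import Mathlib

/-- The Lovász extension of a set-function `F`, defined via a nondecreasing
ordering `σ = Tuple.sort w` of the components of `w`. -/
noncomputable def lovasz {p : ℕ} (F : Finset (Fin p) → ℝ) (w : Fin p → ℝ) : ℝ :=
  ∑ k : Fin p, w (Tuple.sort w k) *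
    (F ((Finset.Ici k).image (Tuple.sort w)) - F ((Finset.Ioi k).image (Tuple.sort w)))

def Submodular {p : ℕ} (F : Finset (Fin p) → ℝ) : Prop :=
  ∀ A B : Finset (Fin p), F (A ∪ B) + F (A ∩ B) ≤ F A + F B

/-- Membership in the submodular polyhedron `P(F)`. -/
def MemP {p : ℕ} (F : Finset (Fin p) → ℝ) (s : Fin p → ℝ) : Prop :=
  ∀ A : Finset (Fin p), ∑ k ∈ A, s k ≤ F A

/-- The greedy vector lies in the submodular polyhedron. -/
lemma greedy_memP {p : ℕ} (F : Finset (Fin p) → ℝ) (hF : Submodular F) (h0 : F ∅ = 0)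
    (σ : Equiv.Perm (Fin p)) (s : Fin p → ℝ)
    (hs : ∀ k : Fin p,
      s (σ k) = F ((Finset.Iic k).image σ) - F ((Finset.Iio k).image σ)) :
    MemP F s := by
  intro A
  induction A using Finset.strongInductionOn with
  | _ A ih =>
    rcases A.eq_empty_or_nonempty with rfl | hA
    · simp [h0]
    · have hB : (A.image σ.symm).Nonempty := hA.image _
      set m := (A.image σ.symm).max' hB with hm
      have hmA : σ m ∈ A := by
        have hmem := (A.image σ.symm).max'_mem hB
        rw [← hm] at hmem
        obtain ⟨i, hi, hi2⟩ := Finset.mem_image.mp hmem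
        rwa [← hi2, Equiv.apply_symm_apply]
      have hle : ∀ i ∈ A, σ.symm i ≤ m := fun i hi =>
        Finset.le_max' _ _ (Finset.mem_image_of_mem _ hi)
      have h1 : A ∪ (Finset.Iio m).image σ = (Finset.Iic m).image σ := by
        ext i
        simp only [Finset.mem_union, Finset.mem_image, Finset.mem_Iio, Finset.mem_Iic]
        constructor
        · rintro (hi | ⟨j, hj, rfl⟩)
          · exact ⟨σ.symm i, hle i hi, Equiv.apply_symm_apply _ _⟩
          · exact ⟨j, le_of_lt hj, rfl⟩
        · rintro ⟨j, hj, rfl⟩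
          rcases lt_or_eq_of_le hj with hj | rfl
          · exact Or.inr ⟨j, hj, rfl⟩
          · exact Or.inl hmA
      have h2 : A ∩ (Finset.Iio m).image σ = A.erase (σ m) := by
        ext i
        simp only [Finset.mem_inter, Finset.mem_image, Finset.mem_Iio, Finset.mem_erase]
        constructor
        · rintro ⟨hi, j, hj, rfl⟩
          exact ⟨fun h => (ne_of_lt hj) (σ.injective h), hi⟩
        · rintro ⟨hne, hi⟩
          refine ⟨hi, σ.symm i, ?_, Equiv.apply_symm_apply _ _⟩
          rcases lt_or_eq_of_le (hle i hi) with h | h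
          · exact h
          · exact absurd (by rw [← h, Equiv.apply_symm_apply] : σ m = i).symm hne
      have hsub := hF A ((Finset.Iio m).image σ)
      rw [h1, h2] at hsub
      have herase := ih (A.erase (σ m)) (Finset.erase_ssubset hmA)
      have hsplit : ∑ k ∈ A, s k = s (σ m) + ∑ k ∈ A.erase (σ m), s k :=
        (Finset.add_sum_erase A s hmA).symm
      rw [hsplit, hs m]
      linarith

/-- The greedy vector maximizes `wᵀ t` over the submodular polyhedron. -/
lemma greedy_opt {p : ℕ} (F : Finset (Fin p) → ℝ) (h0 : F ∅ = 0)
    (w : Fin p → ℝ) (hw : ∀ i, 0 ≤ w i)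
    (σ : Equiv.Perm (Fin p)) (hσ : Antitone (w ∘ σ))
    (s : Fin p → ℝ)
    (hs : ∀ k : Fin p,
      s (σ k) = F ((Finset.Iic k).image σ) - F ((Finset.Iio k).image σ))
    (t : Fin p → ℝ) (ht : MemP F t) :
    ∑ i, w i * t i ≤ ∑ i, w i * s i := by
  rcases Nat.eq_zero_or_pos p with rfl | hp
  · simp
  classical
  set c : ℕ → ℝ := fun n => if h : n < p then w (σ ⟨n, h⟩) else 0 with hc
  set g : (Fin p → ℝ) → ℕ → ℝ := fun u n => if h : n < p then u (σ ⟨n, h⟩) else 0 with hg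
  set A : ℕ → Finset (Fin p) :=
    fun n => Finset.univ.filter fun i => (σ.symm i : ℕ) < n with hA
  have hA0 : A 0 = ∅ := by
    ext i; simp [hA]
  have hins : ∀ n (h : n < p), A (n + 1) = insert (σ ⟨n, h⟩) (A n) := by
    intro n h
    ext i
    simp only [hA, Finset.mem_filter, Finset.mem_univ, true_and, Finset.mem_insert]
    constructor
    · intro hi
      rcases Nat.lt_succ_iff_lt_or_eq.mp hi with h' | h'
      · exact Or.inr h'
      · left
        have : σ.symm i = ⟨n, h⟩ := Fin.ext h'
        rw [← this, Equiv.apply_symm_apply]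
    · rintro (rfl | hi)
      · simp [Equiv.symm_apply_apply]
      · omega
  have hnotmem : ∀ n (h : n < p), σ ⟨n, h⟩ ∉ A n := by
    intro n h
    simp [hA, Equiv.symm_apply_apply]
  have hstab : ∀ n, ¬ n < p → A (n + 1) = A n := by
    intro n h
    ext i
    simp only [hA, Finset.mem_filter, Finset.mem_univ, true_and]
    have := (σ.symm i).isLt
    omega
  have hIio : ∀ n (h : n < p), (Finset.Iio (⟨n, h⟩ : Fin p)).image σ = A n := by
    intro n h
    ext i
    simp only [Finset.mem_image, Finset.mem_Iio, hA, Finset.mem_filter, Finset.mem_univ,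
      true_and, Fin.lt_def]
    constructor
    · rintro ⟨j, hj, rfl⟩
      simpa [Equiv.symm_apply_apply] using hj
    · intro hi
      exact ⟨σ.symm i, hi, Equiv.apply_symm_apply _ _⟩
  have hIic : ∀ n (h : n < p), (Finset.Iic (⟨n, h⟩ : Fin p)).image σ = A (n + 1) := by
    intro n h
    ext i
    simp only [Finset.mem_image, Finset.mem_Iic, hA, Finset.mem_filter, Finset.mem_univ,
      true_and, Fin.le_def]
    constructor
    · rintro ⟨j, hj, rfl⟩
      simp only [Equiv.symm_apply_apply]
      omega
    · intro hi
      exact ⟨σ.symm i, by omega, Equiv.apply_symm_apply _ _⟩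
  have hTA : ∀ (u : Fin p → ℝ) n, ∑ j ∈ Finset.range n, g u j = ∑ i ∈ A n, u i := by
    intro u n
    induction n with
    | zero => simp [hA0]
    | succ n ihn =>
      rw [Finset.sum_range_succ, ihn]
      by_cases h : n < p
      · rw [hins n h, Finset.sum_insert (hnotmem n h), hg]
        simp only [h, dif_pos]
        ring
      · rw [hstab n h, hg]
        simp [h]
  have hFA : ∀ n, ∑ i ∈ A n, s i = F (A n) := by
    intro n
    induction n with
    | zero => rw [hA0]; simp [h0]
    | succ n ihn =>
      by_cases h : n < p
      · calc ∑ i ∈ A (n + 1), s i = s (σ ⟨n, h⟩) + ∑ i ∈ A n, s i := by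
              rw [hins n h, Finset.sum_insert (hnotmem n h)]
          _ = F (A (n + 1)) := by
              rw [hs ⟨n, h⟩, hIic n h, hIio n h, ihn]; ring
      · rw [hstab n h]; exact ihn
  have key : ∀ u : Fin p → ℝ, ∑ i, w i * u i = ∑ n ∈ Finset.range p, c n * g u n := by
    intro u
    rw [← Equiv.sum_comp σ (fun i => w i * u i),
      ← Fin.sum_univ_eq_sum_range (fun n => c n * g u n) p]
    apply Finset.sum_congr rfl
    intro k _
    simp [hc, hg, k.isLt]
  have parts : ∀ u : Fin p → ℝ, ∑ i, w i * u i
      = c (p - 1) * (∑ i ∈ A p, u i)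
        - ∑ i ∈ Finset.range (p - 1), (c (i + 1) - c i) * (∑ j ∈ A (i + 1), u j) := by
    intro u
    rw [key u]
    have := Finset.sum_range_by_parts c (g u) p
    simp only [smul_eq_mul] at this
    rw [this]
    simp only [hTA u]
  have hT : ∀ n, ∑ i ∈ A n, t i ≤ ∑ i ∈ A n, s i :=
    fun n => le_trans (ht (A n)) (hFA n).ge
  rw [parts t, parts s]
  have hc0 : 0 ≤ c (p - 1) := by
    have h : p - 1 < p := by omega
    simp only [hc, h, dif_pos]
    exact hw _
  apply sub_le_sub (mul_le_mul_of_nonneg_left (hT p) hc0)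
  apply Finset.sum_le_sum
  intro i hi
  have hi' : i < p - 1 := Finset.mem_range.mp hi
  have h1 : i + 1 < p := by omega
  have h2 : i < p := by omega
  have hcle : c (i + 1) - c i ≤ 0 := by
    simp only [hc, h1, h2, dif_pos, sub_nonpos]
    exact hσ (by simp [Fin.le_def] : (⟨i, h2⟩ : Fin p) ≤ ⟨i + 1, h1⟩)
  exact mul_le_mul_of_nonpos_left (hT (i + 1)) hcle

lemma image_rev_Iic {p : ℕ} (j : Fin p) :
    (Finset.Iic j).image Fin.rev = Finset.Ici j.rev := by
  ext i
  simp only [Finset.mem_image, Finset.mem_Iic, Finset.mem_Ici]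
  constructor
  · rintro ⟨x, hx, rfl⟩
    exact Fin.rev_le_rev.mpr hx
  · intro h
    exact ⟨i.rev, by rwa [← Fin.rev_rev j, Fin.rev_le_rev], Fin.rev_rev i⟩

lemma image_rev_Iio {p : ℕ} (j : Fin p) :
    (Finset.Iio j).image Fin.rev = Finset.Ioi j.rev := by
  ext i
  simp only [Finset.mem_image, Finset.mem_Iio, Finset.mem_Ioi]
  constructor
  · rintro ⟨x, hx, rfl⟩
    exact Fin.rev_lt_rev.mpr hx
  · intro h
    exact ⟨i.rev, by rwa [← Fin.rev_rev j, Fin.rev_lt_rev], Fin.rev_rev i⟩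

/-- Greedy algorithm: given an ordering `σ` with `w (σ 1) ≥ ⋯ ≥ w (σ p) ≥ 0`, the
greedy vector `s` with `s (σ k) = F({σ 1,…,σ k}) − F({σ 1,…,σ (k−1)})` lies in `P(F)`,
maximizes `wᵀ s` over `P(F)`, and the maximal value is the Lovász extension `f(w)`. -/
theorem greedy_algorithm {p : ℕ} (F : Finset (Fin p) → ℝ)
    (hF : Submodular F) (h0 : F ∅ = 0)
    (w : Fin p → ℝ) (hw : ∀ i, 0 ≤ w i)
    (σ : Equiv.Perm (Fin p)) (hσ : Antitone (w ∘ σ))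
    (s : Fin p → ℝ)
    (hs : ∀ k : Fin p,
      s (σ k) = F ((Finset.Iic k).image σ) - F ((Finset.Iio k).image σ)) :
    MemP F s ∧ (∀ t : Fin p → ℝ, MemP F t → ∑ i, w i * t i ≤ ∑ i, w i * s i) ∧
      ∑ i, w i * s i = lovasz F w := by
  classical
  have hP := greedy_memP F hF h0 σ s hs
  have hopt : ∀ t : Fin p → ℝ, MemP F t → ∑ i, w i * t i ≤ ∑ i, w i * s i :=
    fun t ht => greedy_opt F h0 w hw σ hσ s hs t ht
  refine ⟨hP, hopt, ?_⟩
  set τ : Equiv.Perm (Fin p) := Tuple.sort w with hτ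
  set σ' : Equiv.Perm (Fin p) := Fin.revPerm.trans τ with hσ'def
  have hσ'app : ∀ k : Fin p, σ' k = τ k.rev := fun k => rfl
  have hσ'anti : Antitone (w ∘ σ') := by
    intro a b hab
    exact Tuple.monotone_sort w (Fin.rev_le_rev.mpr hab)
  set s' : Fin p → ℝ := fun i =>
    F ((Finset.Iic (σ'.symm i)).image σ') - F ((Finset.Iio (σ'.symm i)).image σ') with hs'def
  have hs' : ∀ k : Fin p,
      s' (σ' k) = F ((Finset.Iic k).image σ') - F ((Finset.Iio k).image σ') := by
    intro k
    simp [hs'def]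
  have hP' := greedy_memP F hF h0 σ' s' hs'
  have hopt' : ∀ t : Fin p → ℝ, MemP F t → ∑ i, w i * t i ≤ ∑ i, w i * s' i :=
    fun t ht => greedy_opt F h0 w hw σ' hσ'anti s' hs' t ht
  have heq : ∑ i, w i * s i = ∑ i, w i * s' i :=
    le_antisymm (hopt' s hP) (hopt s' hP')
  rw [heq]
  have hrev : ∀ j : Fin p,
      w (σ' j) * (F ((Finset.Iic j).image σ') - F ((Finset.Iio j).image σ'))
        = w (τ j.rev) * (F ((Finset.Ici j.rev).image τ) - F ((Finset.Ioi j.rev).image τ)) := by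
    intro j
    have h1 : (Finset.Iic j).image σ' = (Finset.Ici j.rev).image τ := by
      have : (Finset.Iic j).image (⇑σ') = ((Finset.Iic j).image Fin.rev).image τ := by
        rw [Finset.image_image]; rfl
      rw [this, image_rev_Iic]
    have h2 : (Finset.Iio j).image σ' = (Finset.Ioi j.rev).image τ := by
      have : (Finset.Iio j).image (⇑σ') = ((Finset.Iio j).image Fin.rev).image τ := by
        rw [Finset.image_image]; rfl
      rw [this, image_rev_Iio]
    rw [h1, h2, hσ'app]
  calc ∑ i, w i * s' i = ∑ j, w (σ' j) * s' (σ' j) := (Equiv.sum_comp σ' fun i => w i * s' i).symm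
    _ = ∑ j, w (σ' j) * (F ((Finset.Iic j).image σ') - F ((Finset.Iio j).image σ')) := by
        simp_rw [hs']
    _ = ∑ j : Fin p, w (τ j.rev) * (F ((Finset.Ici j.rev).image τ) - F ((Finset.Ioi j.rev).image τ)) := by
        simp_rw [hrev]
    _ = lovasz F w := by
        rw [lovasz]
        exact Equiv.sum_comp Fin.revPerm
          (fun k => w (τ k) * (F ((Finset.Ici k).image τ) - F ((Finset.Ioi k).image τ)))
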